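/- For the one-or-many distribution with r = N+1, the value γ = 1/N^2 is a fixed point of g_N with g_N'(1/N^2) = 1 when p = (1 − 1/N)(1 − 1/N^2)^{−N}. -/

import Mathlib

/-- For the one-or-many distribution with `r = N+1` and
`p = (1 - 1/N)(1 - 1/N²)^{-N}`, the value `1/N²` is a fixed point of `g_N`
with `g_N'(1/N²) = 1`. -/
theorem one_or_many_general_critical (N : ℕ) (hN : 2 ≤ N)
    (p : ℝ) (hp : p = (1 - 1 / (N : ℝ)) * ((1 - 1 / (N : ℝ) ^ 2) ^ N)⁻¹)
    (g : ℝ → ℝ)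
    (hg : g = fun s => 1 - p * (((N : ℝ) + 1) * (1 - s) ^ N * s + (1 - s) ^ (N + 1))) :
    g (1 / (N : ℝ) ^ 2) = 1 / (N : ℝ) ^ 2 ∧ deriv g (1 / (N : ℝ) ^ 2) = 1 := by
  obtain ⟨M, rfl⟩ : ∃ M, N = M + 2 := ⟨N - 2, by omega⟩
  set c : ℝ := (↑(M + 2) : ℝ) with hc
  have hc2 : (2:ℝ) ≤ c := by rw [hc]; exact_mod_cast hN
  have hc0 : c ≠ 0 := by linarith
  have hx1 : (0:ℝ) < 1 - 1 / c ^ 2 := by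
    rw [sub_pos, div_lt_one (by positivity)]; nlinarith
  have hq0 : ((1 - 1 / c ^ 2) ^ (M + 2)) ≠ 0 := by positivity
  set x : ℝ := 1 / c ^ 2 with hxdef
  have hx : (1 : ℝ) - x = 1 - 1 / c ^ 2 := rfl
  set q : ℝ := (1 - 1 / c ^ 2) ^ (M + 1) with hqdef
  have hq : (1 - x) ^ (M + 2) = q * (1 - x) := by rw [hx, pow_succ]
  have hpq : p * (q * (1 - x)) = 1 - 1 / c := by
    rw [hp, ← hq, hx]
    have h3 : (0:ℝ) < c ^ 2 - 1 := by nlinarith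
    field_simp
  constructor
  · rw [hg]
    simp only
    rw [hq, pow_succ, hq]
    have : ((c + 1) * (q * (1 - x)) * x + q * (1 - x) * (1 - x)) =
        (q * (1 - x)) * ((c+1) * x + (1 - x)) := by ring
    rw [this, ← mul_assoc, hpq]
    rw [hxdef]
    field_simp
    ring
  · have h1 : HasDerivAt (fun s : ℝ => 1 - s) (-1) x := (hasDerivAt_id x).const_sub 1
    have hpow : HasDerivAt (fun s : ℝ => (1 - s) ^ (M + 2))
        (↑(M+2) * (1 - x) ^ (M + 1) * (-1)) x := by
      have := h1.fun_pow (M + 2)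
      simpa using this
    have hA : HasDerivAt (fun s : ℝ => (c + 1) * (1 - s) ^ (M + 2) * s)
        ((c + 1) * (↑(M+2) * (1 - x) ^ (M + 1) * (-1)) * x + (c + 1) * (1 - x) ^ (M + 2) * 1) x := by
      exact ((hpow.const_mul (c + 1)).mul (hasDerivAt_id x))
    have hB : HasDerivAt (fun s : ℝ => (1 - s) ^ (M + 2 + 1))
        (↑(M+3) * (1 - x) ^ (M + 2) * (-1)) x := by
      have := h1.fun_pow (M + 3)
      simpa [show M + 2 + 1 = M + 3 from rfl] using this
    have hg' : HasDerivAt g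
        (-(p * (((c + 1) * (↑(M+2) * (1 - x) ^ (M + 1) * (-1)) * x + (c + 1) * (1 - x) ^ (M + 2) * 1)
          + ↑(M+3) * (1 - x) ^ (M + 2) * (-1)))) x := by
      rw [hg]
      exact ((hA.add hB).const_mul p).const_sub 1
    rw [hg'.deriv]
    have hM2 : ((M:ℝ) + 2) = c := by rw [hc]; push_cast; ring
    have hq1 : (1 - x) ^ (M + 1) = q := by rw [hx, hqdef]
    have hxkey : (1 - 1 / c) * (c * (c + 1) * x) = 1 - x := by
      rw [hxdef, hx]; field_simp; ring
    have hM3 : ((M:ℝ) + 3) = c + 1 := by rw [hc]; push_cast; ring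
    push_cast
    rw [hM3, hM2, hq, hq1]
    have hy : (1 : ℝ) - x ≠ 0 := ne_of_gt hx1
    have key : (-(p * ((c + 1) * (c * q * -1) * x + (c + 1) * (q * (1 - x)) * 1 +
        (c + 1) * (q * (1 - x)) * -1))) * (1 - x) = 1 * (1 - x) := by
      linear_combination (c * (c + 1) * x) * hpq + hxkey
    exact mul_right_cancel₀ hy key
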